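/- In A(R), for any fixed permutation η ∈ Sₙ, the quantum determinant satisfies det_{r,s}T = (−s)^{−ℓ(η)} Σ_{σ∈Sₙ} (−s)^{ℓ(σ)} t_{σ(1),η(1)}⋯t_{σ(n),η(n)}; in particular, for two permutations η, η' ∈ Sₙ, (−s)^{−ℓ(η)} Σ_σ (−s)^{ℓ(σ)} t_{σ(1),η(1)}⋯t_{σ(n),η(n)} = (−s)^{−ℓ(η')} Σ_σ (−s)^{ℓ(σ)} t_{σ(1),η'(1)}⋯t_{σ(n),η'(n)}. -/

import Mathlib

noncomputable def Rmat (n : ℕ) (r s : ℂ) :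
    Matrix (Fin n × Fin n) (Fin n × Fin n) ℂ := fun p q =>
  (if q = p then (if p.1 = p.2 then s else if p.2 < p.1 then r * s else 1) else 0)
    + (if q = (p.2, p.1) ∧ p.2 < p.1 then s - r else 0)

/-- The length (number of inversions) of a permutation of `Fin n`. -/
def invNum {n : ℕ} (σ : Equiv.Perm (Fin n)) : ℕ :=
  (Finset.univ.filter fun p : Fin n × Fin n => p.1 < p.2 ∧ σ p.2 < σ p.1).card

/-- The ordered product `t_{σ(1),η(1)} ⋯ t_{σ(n),η(n)}` in a (noncommutative)
algebra. -/
def prodT {A : Type*} [Ring A] {n : ℕ} (t : Fin n → Fin n → A)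
    (σ η : Fin n → Fin n) : A :=
  ((List.finRange n).map fun i => t (σ i) (η i)).prod

/-- in `A(R)` (generators `t_{ij}` with RTT relations
`Σ_{a,b} R^{ij}_{ab} t_{ak} t_{bl} = Σ_{a,b} R^{ab}_{kl} t_{jb} t_{ia}` for the
two-parameter R-matrix), for any fixed `η ∈ Sₙ` the quantum determinant
`det_{r,s}T = Σ_{σ}(-s)^{ℓ(σ)} t_{σ(1),1}⋯t_{σ(n),n}` equals
`(-s)^{-ℓ(η)} Σ_{σ}(-s)^{ℓ(σ)} t_{σ(1),η(1)}⋯t_{σ(n),η(n)}`; in particular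
this expression is independent of `η`. -/
lemma sum_Rmat_left {A : Type*} [Ring A] [Algebra ℂ A] {n : ℕ} (r s : ℂ)
    (f : Fin n → Fin n → A) (i j : Fin n) :
    ∑ a : Fin n, ∑ b : Fin n, Rmat n r s (i, j) (a, b) • f a b =
      (if i = j then s else if j < i then r * s else 1) • f i j
        + (if j < i then (s - r) • f j i else 0) := by
  simp only [Rmat, Prod.mk.injEq, add_smul, Finset.sum_add_distrib, ite_and, ite_smul,
    zero_smul, Finset.sum_ite_eq, Finset.sum_ite_eq', Finset.mem_univ, if_true,
    Finset.sum_ite_irrel, Finset.sum_const_zero]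

lemma sum_Rmat_right {A : Type*} [Ring A] [Algebra ℂ A] {n : ℕ} (r s : ℂ)
    (f : Fin n → Fin n → A) (k l : Fin n) :
    ∑ a : Fin n, ∑ b : Fin n, Rmat n r s (a, b) (k, l) • f a b =
      (if k = l then s else if l < k then r * s else 1) • f k l
        + (if k < l then (s - r) • f l k else 0) := by
  simp only [Rmat, Prod.mk.injEq, add_smul, Finset.sum_add_distrib, ite_and, ite_smul,
    zero_smul, Finset.sum_ite_eq, Finset.sum_ite_eq', Finset.mem_univ, if_true,
    Finset.sum_ite_irrel, Finset.sum_const_zero]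

lemma swap_lt {n m : ℕ} (hm : m + 1 < n) {i j : Fin n} (hij : i < j)
    (hne : ¬(i = ⟨m, Nat.lt_of_succ_lt hm⟩ ∧ j = ⟨m + 1, hm⟩)) :
    Equiv.swap ⟨m, Nat.lt_of_succ_lt hm⟩ ⟨m + 1, hm⟩ i
      < Equiv.swap ⟨m, Nat.lt_of_succ_lt hm⟩ ⟨m + 1, hm⟩ j := by
  simp only [Equiv.swap_apply_def]
  split_ifs <;>
    (simp only [Fin.ext_iff, Fin.lt_def, Fin.val_mk, not_and] at *; omega)

lemma invNum_mul_swap {n m : ℕ} (hm : m + 1 < n) (σ : Equiv.Perm (Fin n))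
    (h : σ ⟨m, Nat.lt_of_succ_lt hm⟩ < σ ⟨m + 1, hm⟩) :
    invNum (σ * Equiv.swap ⟨m, Nat.lt_of_succ_lt hm⟩ ⟨m + 1, hm⟩) = invNum σ + 1 := by
  set k : Fin n := ⟨m, Nat.lt_of_succ_lt hm⟩ with hk
  set k' : Fin n := ⟨m + 1, hm⟩ with hk'
  have hkk' : k < k' := by simp [hk, hk', Fin.lt_def]
  have hmemτ : (k, k') ∈ (Finset.univ.filter fun p : Fin n × Fin n =>
      p.1 < p.2 ∧ (σ * Equiv.swap k k') p.2 < (σ * Equiv.swap k k') p.1) := by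
    simp only [Finset.mem_filter, Finset.mem_univ, true_and]
    exact ⟨hkk', by simp [Equiv.Perm.mul_apply, h]⟩
  have hnot : (k, k') ∉ (Finset.univ.filter fun p : Fin n × Fin n =>
      p.1 < p.2 ∧ σ p.2 < σ p.1) := by
    simp only [Finset.mem_filter, Finset.mem_univ, true_and, not_and]
    intro _ h2
    exact absurd h (not_lt.2 h2.le)
  have key : (((Finset.univ.filter fun p : Fin n × Fin n =>
        p.1 < p.2 ∧ (σ * Equiv.swap k k') p.2 < (σ * Equiv.swap k k') p.1)).erase (k, k')).card
      = (((Finset.univ.filter fun p : Fin n × Fin n =>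
        p.1 < p.2 ∧ σ p.2 < σ p.1)).erase (k, k')).card := by
    apply Finset.card_nbij' (i := fun p => (Equiv.swap k k' p.1, Equiv.swap k k' p.2))
      (j := fun p => (Equiv.swap k k' p.1, Equiv.swap k k' p.2))
    · intro p hp
      rw [Finset.mem_coe, Finset.mem_erase, Finset.mem_filter] at hp
      obtain ⟨hpne, -, hp1, hp2⟩ := hp
      have hne : ¬(p.1 = k ∧ p.2 = k') := fun ⟨h1, h2⟩ => hpne (Prod.ext h1 h2)
      have hlt : Equiv.swap k k' p.1 < Equiv.swap k k' p.2 := swap_lt hm hp1 hne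
      rw [Finset.mem_coe, Finset.mem_erase, Finset.mem_filter]
      refine ⟨?_, Finset.mem_univ _, hlt, by simpa [Equiv.Perm.mul_apply] using hp2⟩
      intro hcontra
      have h1 : Equiv.swap k k' p.1 = k := congrArg Prod.fst hcontra
      have h2 : Equiv.swap k k' p.2 = k' := congrArg Prod.snd hcontra
      have e1 : p.1 = k' := by
        have := congrArg (Equiv.swap k k') h1
        rwa [Equiv.swap_apply_self, Equiv.swap_apply_left] at this
      have e2 : p.2 = k := by
        have := congrArg (Equiv.swap k k') h2
        rwa [Equiv.swap_apply_self, Equiv.swap_apply_right] at this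
      rw [e1, e2] at hp1
      exact absurd hkk' (not_lt.2 hp1.le)
    · intro p hp
      rw [Finset.mem_coe, Finset.mem_erase, Finset.mem_filter] at hp
      obtain ⟨hpne, -, hp1, hp2⟩ := hp
      have hne : ¬(p.1 = k ∧ p.2 = k') := fun ⟨h1, h2⟩ => hpne (Prod.ext h1 h2)
      have hlt : Equiv.swap k k' p.1 < Equiv.swap k k' p.2 := swap_lt hm hp1 hne
      rw [Finset.mem_coe, Finset.mem_erase, Finset.mem_filter]
      refine ⟨?_, Finset.mem_univ _, hlt,
        by simpa [Equiv.Perm.mul_apply, Equiv.swap_apply_self] using hp2⟩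
      intro hcontra
      have h1 : Equiv.swap k k' p.1 = k := congrArg Prod.fst hcontra
      have h2 : Equiv.swap k k' p.2 = k' := congrArg Prod.snd hcontra
      have e1 : p.1 = k' := by
        have := congrArg (Equiv.swap k k') h1
        rwa [Equiv.swap_apply_self, Equiv.swap_apply_left] at this
      have e2 : p.2 = k := by
        have := congrArg (Equiv.swap k k') h2
        rwa [Equiv.swap_apply_self, Equiv.swap_apply_right] at this
      rw [e1, e2] at hp1
      exact absurd hkk' (not_lt.2 hp1.le)
    · intro p _; simp [Equiv.swap_apply_self, Prod.ext_iff]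
    · intro p _; simp [Equiv.swap_apply_self, Prod.ext_iff]
  have h1 := Finset.card_erase_add_one hmemτ
  have h2 : ((Finset.univ.filter fun p : Fin n × Fin n =>
      p.1 < p.2 ∧ σ p.2 < σ p.1)).erase (k, k') = (Finset.univ.filter fun p : Fin n × Fin n =>
      p.1 < p.2 ∧ σ p.2 < σ p.1) := Finset.erase_eq_of_notMem hnot
  rw [h2] at key
  show (Finset.univ.filter fun p : Fin n × Fin n =>
      p.1 < p.2 ∧ (σ * Equiv.swap k k') p.2 < (σ * Equiv.swap k k') p.1).card = invNum σ + 1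
  rw [← h1, key]
  rfl

lemma prod_split {A : Type*} [Ring A] {n m : ℕ} (hm : m + 1 < n) (u : Fin n → A) :
    ((List.finRange n).map u).prod =
      (((List.finRange n).take m).map u).prod *
        (u ⟨m, Nat.lt_of_succ_lt hm⟩ * u ⟨m + 1, hm⟩) *
        (((List.finRange n).drop (m + 2)).map u).prod := by
  have h1 : m < (List.finRange n).length := by simp [Nat.lt_of_succ_lt hm]
  have h2 : m + 1 < (List.finRange n).length := by simpa
  conv_lhs => rw [← List.take_append_drop m (List.finRange n),
    List.drop_eq_getElem_cons h1, List.drop_eq_getElem_cons h2]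
  simp [mul_assoc, Fin.cast]

lemma mem_take_finRange {n m : ℕ} {i : Fin n} (h : i ∈ (List.finRange n).take m) :
    (i : ℕ) < m := by
  obtain ⟨j, hj, rfl⟩ := List.mem_iff_getElem.1 h
  simp at hj ⊢
  try omega

lemma mem_drop_finRange {n m : ℕ} {i : Fin n} (h : i ∈ (List.finRange n).drop m) :
    m ≤ (i : ℕ) := by
  obtain ⟨j, hj, rfl⟩ := List.mem_iff_getElem.1 h
  simp at hj ⊢
  try omega

lemma sum_pair {M : Type*} [AddCommMonoid M] {n : ℕ} (τ : Equiv.Perm (Fin n))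
    (hττ : τ * τ = 1) (P : Equiv.Perm (Fin n) → Prop) [DecidablePred P]
    (hP : ∀ σ, P (σ * τ) ↔ ¬P σ) (f : Equiv.Perm (Fin n) → M) :
    ∑ σ : Equiv.Perm (Fin n), f σ
      = ∑ σ ∈ Finset.univ.filter P, (f σ + f (σ * τ)) := by
  rw [Finset.sum_add_distrib, ← Finset.sum_filter_add_sum_filter_not Finset.univ P f]
  congr 1
  apply Finset.sum_nbij' (i := fun σ => σ * τ) (j := fun σ => σ * τ)
  · intro σ hσ
    simp only [Finset.mem_filter, Finset.mem_univ, true_and] at hσ ⊢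
    rw [hP]; simpa using hσ
  · intro σ hσ
    simp only [Finset.mem_filter, Finset.mem_univ, true_and] at hσ ⊢
    exact fun hc => (hP σ).1 hc hσ
  · intro σ _; rw [mul_assoc, hττ, mul_one]
  · intro σ _; rw [mul_assoc, hττ, mul_one]
  · intro σ _; rw [mul_assoc, hττ, mul_one]

lemma step {A : Type*} [Ring A] [Algebra ℂ A] {n : ℕ} (r s : ℂ) (t : Fin n → Fin n → A)
    (rel1 : ∀ a b c d : Fin n, a < b → c < d →
      t a c * t b d = t b d * t a c + (s - r) • (t b c * t a d))
    (rel2 : ∀ a b c d : Fin n, a < b → c < d →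
      t a d * t b c = (r * s) • (t b c * t a d))
    {m : ℕ} (hm : m + 1 < n) (η : Equiv.Perm (Fin n))
    (hη : η ⟨m, Nat.lt_of_succ_lt hm⟩ < η ⟨m + 1, hm⟩) :
    ∑ σ : Equiv.Perm (Fin n), ((-s) ^ invNum σ) •
        prodT t ⇑σ ⇑(η * Equiv.swap (⟨m, Nat.lt_of_succ_lt hm⟩ : Fin n) (⟨m + 1, hm⟩ : Fin n))
      = (-s) • ∑ σ : Equiv.Perm (Fin n), ((-s) ^ invNum σ) • prodT t ⇑σ ⇑η := by
  set k : Fin n := ⟨m, Nat.lt_of_succ_lt hm⟩ with hk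
  set k' : Fin n := ⟨m + 1, hm⟩ with hk'
  set τ : Equiv.Perm (Fin n) := Equiv.swap k k' with hτ
  have hττ : τ * τ = 1 := by
    rw [hτ]; exact Equiv.swap_mul_self k k'
  have hkk' : k ≠ k' := by simp [hk, hk', Fin.ext_iff]
  have hP : ∀ σ : Equiv.Perm (Fin n), (σ * τ) k < (σ * τ) k' ↔ ¬(σ k < σ k') := by
    intro σ
    have hne : σ k ≠ σ k' := fun hc => hkk' (σ.injective hc)
    simp only [Equiv.Perm.mul_apply, hτ, Equiv.swap_apply_left, Equiv.swap_apply_right]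
    constructor
    · intro h1 h2; exact absurd h1 (not_lt.2 h2.le)
    · intro h1; rcases lt_or_eq_of_le (not_lt.1 h1) with h | h
      · exact h
      · exact absurd h.symm hne
  rw [sum_pair τ hττ (fun σ => σ k < σ k') hP,
    sum_pair τ hττ (fun σ => σ k < σ k')  hP, Finset.smul_sum]
  apply Finset.sum_congr rfl
  intro σ hσ
  rw [Finset.mem_filter] at hσ
  have hab : σ k < σ k' := hσ.2
  have hinv : invNum (σ * τ) = invNum σ + 1 := invNum_mul_swap hm σ hab
  -- the four products, rewritten with common outer parts
  have hswap_fix : ∀ i : Fin n, (i : ℕ) ≠ m → (i : ℕ) ≠ m + 1 → τ i = i := by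
    intro i h1 h2
    rw [hτ]
    exact Equiv.swap_apply_of_ne_of_ne (by simp [hk, Fin.ext_iff, h1])
      (by simp [hk', Fin.ext_iff, h2])
  set Q1 : A := (((List.finRange n).take m).map fun i => t (σ i) (η i)).prod with hQ1
  set Q2 : A := (((List.finRange n).drop (m + 2)).map fun i => t (σ i) (η i)).prod with hQ2
  have congr_take : ∀ u : Fin n → A, (∀ i : Fin n, (i : ℕ) < m → u i = t (σ i) (η i)) →
      (((List.finRange n).take m).map u).prod = Q1 := by
    intro u hu
    rw [hQ1]
    congr 1
    exact List.map_congr_left fun i hi => hu i (mem_take_finRange hi)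
  have congr_drop : ∀ u : Fin n → A, (∀ i : Fin n, m + 2 ≤ (i : ℕ) → u i = t (σ i) (η i)) →
      (((List.finRange n).drop (m + 2)).map u).prod = Q2 := by
    intro u hu
    rw [hQ2]
    congr 1
    exact List.map_congr_left fun i hi => hu i (mem_drop_finRange hi)
  have fix_lt : ∀ i : Fin n, (i : ℕ) < m → τ i = i := fun i hi =>
    hswap_fix i (by omega) (by omega)
  have fix_ge : ∀ i : Fin n, m + 2 ≤ (i : ℕ) → τ i = i := fun i hi =>
    hswap_fix i (by omega) (by omega)
  have hτk : τ k = k' := by rw [hτ]; exact Equiv.swap_apply_left k k'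
  have hτk' : τ k' = k := by rw [hτ]; exact Equiv.swap_apply_right k k'
  have e1 : prodT t ⇑σ ⇑(η * τ) = Q1 * (t (σ k) (η k') * t (σ k') (η k)) * Q2 := by
    rw [prodT, prod_split hm]
    rw [congr_take _ (fun i hi => by rw [Equiv.Perm.mul_apply, fix_lt i hi]),
      congr_drop _ (fun i hi => by rw [Equiv.Perm.mul_apply, fix_ge i hi])]
    rw [← hk, ← hk', Equiv.Perm.mul_apply, Equiv.Perm.mul_apply, hτk, hτk']
  have e2 : prodT t ⇑(σ * τ) ⇑(η * τ) = Q1 * (t (σ k') (η k') * t (σ k) (η k)) * Q2 := by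
    rw [prodT, prod_split hm]
    rw [congr_take _ (fun i hi => by
        rw [Equiv.Perm.mul_apply, Equiv.Perm.mul_apply, fix_lt i hi]),
      congr_drop _ (fun i hi => by
        rw [Equiv.Perm.mul_apply, Equiv.Perm.mul_apply, fix_ge i hi])]
    rw [← hk, ← hk', Equiv.Perm.mul_apply, Equiv.Perm.mul_apply, Equiv.Perm.mul_apply,
      Equiv.Perm.mul_apply, hτk, hτk']
  have e3 : prodT t ⇑σ ⇑η = Q1 * (t (σ k) (η k) * t (σ k') (η k')) * Q2 := by
    rw [prodT, prod_split hm]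
  have e4 : prodT t ⇑(σ * τ) ⇑η = Q1 * (t (σ k') (η k) * t (σ k) (η k')) * Q2 := by
    rw [prodT, prod_split hm]
    rw [congr_take _ (fun i hi => by rw [Equiv.Perm.mul_apply, fix_lt i hi]),
      congr_drop _ (fun i hi => by rw [Equiv.Perm.mul_apply, fix_ge i hi])]
    rw [← hk, ← hk', Equiv.Perm.mul_apply, Equiv.Perm.mul_apply, hτk, hτk']
  rw [e1, e2, e3, e4, hinv]
  rw [rel2 (σ k) (σ k') (η k) (η k') hab hη, rel1 (σ k) (σ k') (η k) (η k') hab hη]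
  simp only [pow_succ, mul_add, add_mul, smul_mul_assoc, mul_smul_comm, smul_add, smul_smul,
    mul_assoc]
  match_scalars <;> ring

theorem stmt9 {A : Type*} [Ring A] [Algebra ℂ A] (n : ℕ) (r s : ℂ)
    (hr : r ≠ 0) (hs : s ≠ 0) (t : Fin n → Fin n → A)
    (hRTT : ∀ i j k l : Fin n,
      ∑ a : Fin n, ∑ b : Fin n, Rmat n r s (i, j) (a, b) • (t a k * t b l)
        = ∑ a : Fin n, ∑ b : Fin n, Rmat n r s (a, b) (k, l) • (t j b * t i a)) :
    ∀ η : Equiv.Perm (Fin n),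
      ∑ σ : Equiv.Perm (Fin n), ((-s) ^ invNum σ) • prodT t σ id
        = ((-s) ^ (-(invNum η : ℤ))) •
            ∑ σ : Equiv.Perm (Fin n), ((-s) ^ invNum σ) • prodT t σ η := by
  -- derive the two exchange relations
  have rel1 : ∀ a b c d : Fin n, a < b → c < d →
      t a c * t b d = t b d * t a c + (s - r) • (t b c * t a d) := by
    intro a b c d hab hcd
    have h := hRTT a b c d
    rw [sum_Rmat_left r s (fun x y => t x c * t y d) a b,
      sum_Rmat_right r s (fun x y => t b y * t a x) c d] at h
    simp only [if_neg hab.ne, if_neg (not_lt.2 hab.le), if_neg hcd.ne,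
      if_neg (not_lt.2 hcd.le), if_pos hcd, one_smul, add_zero] at h
    exact h
  have rel2 : ∀ a b c d : Fin n, a < b → c < d →
      t a d * t b c = (r * s) • (t b c * t a d) := by
    intro a b c d hab hcd
    have h := hRTT a b d c
    rw [sum_Rmat_left r s (fun x y => t x d * t y c) a b,
      sum_Rmat_right r s (fun x y => t b y * t a x) d c] at h
    simp only [if_neg hab.ne, if_neg (not_lt.2 hab.le), if_neg hcd.ne', if_pos hcd,
      if_neg (not_lt.2 hcd.le), one_smul, add_zero] at h
    exact h
  -- main induction on the number of inversions
  have main : ∀ N : ℕ, ∀ η : Equiv.Perm (Fin n), invNum η = N →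
      (∑ σ : Equiv.Perm (Fin n), ((-s) ^ invNum σ) • prodT t ⇑σ ⇑η)
        = ((-s) ^ invNum η) •
            ∑ σ : Equiv.Perm (Fin n), ((-s) ^ invNum σ) • prodT t ⇑σ id := by
    intro N
    induction N using Nat.strong_induction_on with
    | _ N ih =>
      intro η hN
      by_cases hdesc : ∃ m : ℕ, ∃ hm : m + 1 < n,
          η ⟨m + 1, hm⟩ < η ⟨m, Nat.lt_of_succ_lt hm⟩
      · obtain ⟨m, hm, hlt⟩ := hdesc
        set k : Fin n := ⟨m, Nat.lt_of_succ_lt hm⟩ with hk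
        set k' : Fin n := ⟨m + 1, hm⟩ with hk'
        set τ : Equiv.Perm (Fin n) := Equiv.swap k k' with hτdef
        set η' : Equiv.Perm (Fin n) := η * τ with hη'
        have hττ : τ * τ = 1 := Equiv.swap_mul_self k k'
        have hτk : τ k = k' := Equiv.swap_apply_left k k'
        have hτk' : τ k' = k := Equiv.swap_apply_right k k'
        have hη'k : η' k < η' k' := by
          rw [hη']
          simp only [Equiv.Perm.mul_apply, hτk, hτk']
          exact hlt
        have hback : η' * τ = η := by rw [hη', mul_assoc, hττ, mul_one]
        have hinv : invNum η = invNum η' + 1 := by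
          rw [← hback]
          exact invNum_mul_swap hm η' hη'k
        have hstep := step r s t rel1 rel2 hm η' hη'k
        rw [show Equiv.swap (⟨m, Nat.lt_of_succ_lt hm⟩ : Fin n) (⟨m + 1, hm⟩ : Fin n) = τ
          from rfl, hback] at hstep
        have hIH := ih (invNum η') (by omega) η' rfl
        rw [hstep, hIH, smul_smul, hinv, pow_succ]
        ring_nf
      · push_neg at hdesc
        have hmono : StrictMono ⇑η := by
          match n, η, hdesc with
          | 0, η, hdesc => intro i; exact absurd i.2 (by omega)
          | n + 1, η, hdesc =>
            refine Fin.strictMono_iff_lt_succ.2 fun i => ?_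
            have := hdesc i.1 (by omega)
            rcases lt_or_eq_of_le this with h | h
            · convert h using 2 <;> (apply Fin.ext; simp)
            · exfalso
              have := η.injective h
              simp [Fin.ext_iff] at this
        have hwf : WellFoundedLT (Fin n) := inferInstance
        have hid : ⇑η = id :=
          (StrictMono.range_inj hmono strictMono_id).1
            (by rw [η.surjective.range_eq, Set.range_id])
        have hη0 : invNum η = 0 := by
          rw [invNum, Finset.card_eq_zero, Finset.filter_eq_empty_iff]
          intro p _
          rw [hid]
          rintro ⟨h1, h2⟩
          exact absurd h1 (not_lt.2 h2.le)
        rw [hη0, pow_zero, one_smul, hid]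
  intro η
  rw [main (invNum η) η rfl, smul_smul, zpow_neg, zpow_natCast,
    inv_mul_cancel₀ (pow_ne_zero _ (neg_ne_zero.2 hs)), one_smul]
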